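/- Let A be a commutative ring and I an ideal of A. (1) If the amalgamated duplication A⋈I is a strongly ISP-ring, then A is a strongly ISP-ring. (2) If I is a finitely generated idempotent ideal of A (I² = I), then A⋈I is a strongly ISP-ring if and only if A is a strongly ISP-ring. -/

import Mathlib

/-- An ideal is *regular* if it contains a regular element (a non-zero-divisor). -/
def Ideal.IsRegularIdeal {A : Type*} [CommRing A] (I : Ideal A) : Prop :=
  ∃ a ∈ I, a ∈ nonZeroDivisors A

/-- An ideal is *invertible* if it is regular, finitely generated and locally principal. -/
def Ideal.IsInvertibleIdeal {A : Type*} [CommRing A] (J : Ideal A) : Prop :=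
  J.IsRegularIdeal ∧ J.FG ∧
    ∀ M : Ideal A, ∀ hM : M.IsMaximal,
      haveI := hM.isPrime
      (J.map (algebraMap A (Localization.AtPrime M))).IsPrincipal

/-- `I` can be written as an invertible ideal times a nonempty product of
proper radical ideals. -/
def Ideal.HasISPFactorization {A : Type*} [CommRing A] (I : Ideal A) : Prop :=
  ∃ (J : Ideal A) (L : List (Ideal A)), J.IsInvertibleIdeal ∧ L ≠ [] ∧
    (∀ H ∈ L, H ≠ ⊤ ∧ H.IsRadical) ∧ I = J * L.prod

/-- An ISP-ring: every proper regular ideal factors as an invertible ideal times a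
nonempty product of proper radical ideals. -/
def IsISPRing (A : Type*) [CommRing A] : Prop :=
  ∀ I : Ideal A, I ≠ ⊤ → I.IsRegularIdeal → I.HasISPFactorization

/-- A strongly ISP-ring: every proper ideal factors as an invertible ideal times a
nonempty product of proper radical ideals. -/
def IsStronglyISPRing (A : Type*) [CommRing A] : Prop :=
  ∀ I : Ideal A, I ≠ ⊤ → I.HasISPFactorization

/-- An ISP-domain: an integral domain in which every proper nonzero ideal factors as an
invertible ideal times a nonempty product of proper radical ideals. -/
def IsISPDomain (A : Type*) [CommRing A] : Prop :=
  IsDomain A ∧ ∀ I : Ideal A, I ≠ ⊤ → I ≠ ⊥ → I.HasISPFactorization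

/-- The amalgamated duplication `A ⋈ I` of a ring `A` along an ideal `I`, realized as
the subring `{(a, a + i) : a ∈ A, i ∈ I}` of `A × A`. -/
def AmalgDup {A : Type*} [CommRing A] (I : Ideal A) : Subring (A × A) where
  carrier := {p | p.2 - p.1 ∈ I}
  zero_mem' := by simp
  one_mem' := by simp
  add_mem' := by
    intro a b ha hb
    show (a + b).2 - (a + b).1 ∈ I
    have h : (a + b).2 - (a + b).1 = (a.2 - a.1) + (b.2 - b.1) := by
      simp; ring
    rw [h]; exact I.add_mem ha hb
  neg_mem' := by
    intro a ha
    show (-a).2 - (-a).1 ∈ I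
    have h : (-a).2 - (-a).1 = -(a.2 - a.1) := by
      simp only [Prod.fst_neg, Prod.snd_neg]; ring
    rw [h]; exact I.neg_mem ha
  mul_mem' := by
    intro a b ha hb
    show (a * b).2 - (a * b).1 ∈ I
    have h : (a * b).2 - (a * b).1 = a.2 * (b.2 - b.1) + (a.2 - a.1) * b.1 := by
      simp; ring
    rw [h]
    exact I.add_mem (I.mul_mem_left _ hb) (I.mul_mem_right _ ha)

/-- The ideal `H ⋈ I = {(h, h + i) : h ∈ H, i ∈ I}` of the amalgamated duplication `A ⋈ I`. -/
def Ideal.amalgDup {A : Type*} [CommRing A] (H I : Ideal A) : Ideal (AmalgDup I) where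
  carrier := {x | (x : A × A).1 ∈ H}
  zero_mem' := H.zero_mem
  add_mem' := fun ha hb => H.add_mem ha hb
  smul_mem' := fun c x hx => by
    show ((c * x : AmalgDup I) : A × A).1 ∈ H
    push_cast
    exact H.mul_mem_left _ hx

section Aux

variable {R A B : Type*} [CommRing R] [CommRing A] [CommRing B]

lemma list_prod_le_of_mem {L : List (Ideal A)} {H : Ideal A} (h : H ∈ L) : L.prod ≤ H := by
  induction L with
  | nil => simp at h
  | cons a l ih =>
    rw [List.prod_cons]
    rcases List.mem_cons.mp h with rfl | h
    · exact Ideal.mul_le_left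
    · exact le_trans Ideal.mul_le_right (ih h)

lemma ideal_map_list_prod (f : R →+* A) (L : List (Ideal R)) :
    Ideal.map f L.prod = (L.map (Ideal.map f)).prod := by
  induction L with
  | nil => simpa using Ideal.map_top f
  | cons a l ih => rw [List.prod_cons, Ideal.map_mul, ih, List.map_cons, List.prod_cons]

lemma locPrincipal_map (f : R →+* A) (J : Ideal R) (N : Ideal A) [N.IsPrime]
    (hp : (J.map (algebraMap R (Localization.AtPrime (N.comap f)))).IsPrincipal) :
    ((J.map f).map (algebraMap A (Localization.AtPrime N))).IsPrincipal := by
  set g : R →+* Localization.AtPrime N := (algebraMap A (Localization.AtPrime N)).comp f with hgdef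
  have hg : ∀ s : (N.comap f).primeCompl, IsUnit (g s) := by
    intro s
    exact IsLocalization.map_units (M := N.primeCompl) (Localization.AtPrime N) ⟨f s, s.2⟩
  let ψ := IsLocalization.lift (S := Localization.AtPrime (N.comap f)) hg
  have key : (J.map f).map (algebraMap A (Localization.AtPrime N)) =
      (J.map (algebraMap R (Localization.AtPrime (N.comap f)))).map ψ := by
    rw [Ideal.map_map, Ideal.map_map, IsLocalization.lift_comp]
  obtain ⟨x, hx⟩ := hp
  exact ⟨⟨ψ x, by rw [key, hx]; exact (Ideal.map_span ψ {x}).trans (by simp)⟩⟩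

lemma isStronglyISPRing_of_surjective (f : R →+* A) (hf : Function.Surjective f)
    (hreg : ∀ x ∈ nonZeroDivisors R, f x ∈ nonZeroDivisors A)
    (h : IsStronglyISPRing R) : IsStronglyISPRing A := by
  intro K hK
  have hK' : K.comap f ≠ ⊤ := by
    intro h'
    exact hK (by rw [← Ideal.map_comap_of_surjective f hf K, h', Ideal.map_top])
  obtain ⟨J, L, ⟨⟨x, hxJ, hxr⟩, hfg, hloc⟩, hL0, hLmem, hfac⟩ := h _ hK'
  have hker : ∀ H : Ideal R, K.comap f ≤ H → RingHom.ker f ≤ H := by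
    intro H hH
    refine le_trans ?_ hH
    intro y hy
    simp only [Ideal.mem_comap]
    rw [RingHom.mem_ker.mp hy]
    exact K.zero_mem
  have hcm : ∀ H : Ideal R, RingHom.ker f ≤ H → (Ideal.map f H).comap f = H := by
    intro H hH
    rw [Ideal.comap_map_of_surjective f hf]
    exact sup_eq_left.mpr hH
  refine ⟨J.map f, L.map (Ideal.map f), ?_, ?_, ?_, ?_⟩
  · refine ⟨⟨f x, Ideal.mem_map_of_mem f hxJ, hreg x hxr⟩, hfg.map f, ?_⟩
    intro N hN
    haveI := hN.isPrime
    haveI : (N.comap f).IsMaximal := Ideal.comap_isMaximal_of_surjective f hf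
    exact locPrincipal_map f J N (hloc _ this)
  · simpa using hL0
  · rintro H' hH'
    obtain ⟨H, hHL, rfl⟩ := List.mem_map.mp hH'
    have hHk : RingHom.ker f ≤ H :=
      hker H (hfac ▸ le_trans Ideal.mul_le_right (list_prod_le_of_mem hHL))
    constructor
    · intro htop
      have := hcm H hHk
      rw [htop, Ideal.comap_top] at this
      exact (hLmem H hHL).1 this.symm
    · rintro y ⟨n, hyn⟩
      obtain ⟨z, rfl⟩ := hf y
      have hz : z ^ n ∈ (Ideal.map f H).comap f := by
        simp only [Ideal.mem_comap, map_pow]; exact hyn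
      rw [hcm H hHk] at hz
      exact Ideal.mem_map_of_mem f ((hLmem H hHL).2 ⟨n, hz⟩)
  · rw [← Ideal.map_comap_of_surjective f hf K, hfac, Ideal.map_mul,
      ideal_map_list_prod]

lemma prod_mul_prod (I₁ I₂ : Ideal A) (J₁ J₂ : Ideal B) :
    (Ideal.prod I₁ J₁) * (Ideal.prod I₂ J₂) = Ideal.prod (I₁ * I₂) (J₁ * J₂) := by
  apply le_antisymm
  · rw [Ideal.mul_le]
    intro r hr s hs
    exact ⟨Ideal.mul_mem_mul hr.1 hs.1, Ideal.mul_mem_mul hr.2 hs.2⟩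
  · intro x hx
    obtain ⟨hx1, hx2⟩ := hx
    have h1 : ((x.1, 0) : A × B) ∈ (Ideal.prod I₁ J₁) * (Ideal.prod I₂ J₂) := by
      refine Submodule.mul_induction_on (C := fun t => ((t, (0 : B)) : A × B) ∈ (Ideal.prod I₁ J₁) * (Ideal.prod I₂ J₂)) hx1 ?_ ?_
      · intro i hi k hk
        have := Ideal.mul_mem_mul
          (show ((i, 0) : A × B) ∈ Ideal.prod I₁ J₁ from ⟨hi, J₁.zero_mem⟩)
          (show ((k, 0) : A × B) ∈ Ideal.prod I₂ J₂ from ⟨hk, J₂.zero_mem⟩)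
        simpa using this
      · intro a b ha hb
        simpa using add_mem ha hb
    have h2 : ((0, x.2) : A × B) ∈ (Ideal.prod I₁ J₁) * (Ideal.prod I₂ J₂) := by
      refine Submodule.mul_induction_on (C := fun t => (((0 : A), t) : A × B) ∈ (Ideal.prod I₁ J₁) * (Ideal.prod I₂ J₂)) hx2 ?_ ?_
      · intro i hi k hk
        have := Ideal.mul_mem_mul
          (show ((0, i) : A × B) ∈ Ideal.prod I₁ J₁ from ⟨I₁.zero_mem, hi⟩)
          (show ((0, k) : A × B) ∈ Ideal.prod I₂ J₂ from ⟨I₂.zero_mem, hk⟩)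
        simpa using this
      · intro a b ha hb
        simpa using add_mem ha hb
    simpa using add_mem h1 h2

lemma prod_eq_top_iff {I : Ideal A} {J : Ideal B} : Ideal.prod I J = ⊤ ↔ I = ⊤ ∧ J = ⊤ := by
  constructor
  · intro h
    rw [← Ideal.prod_top_top] at h
    exact Ideal.prod_inj.mp h
  · rintro ⟨rfl, rfl⟩
    exact Ideal.prod_top_top

lemma isRadical_prod {I : Ideal A} {J : Ideal B} (hI : I.IsRadical) (hJ : J.IsRadical) :
    (Ideal.prod I J).IsRadical := by
  rintro x ⟨n, hxn⟩
  have h1 : x.1 ^ n ∈ I := by simpa using hxn.1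
  have h2 : x.2 ^ n ∈ J := by simpa using hxn.2
  exact ⟨hI ⟨n, h1⟩, hJ ⟨n, h2⟩⟩

lemma prod_span_top (S : Set A) :
    Ideal.prod (Submodule.span A S) (⊤ : Ideal B) =
      Ideal.span ((fun s => ((s, 0) : A × B)) '' S ∪ {((0 : A), (1 : B))}) := by
  apply le_antisymm
  · rintro ⟨x, y⟩ ⟨hx, -⟩
    have h1 : ((x, (0 : B)) : A × B) ∈
        Ideal.span ((fun s => ((s, 0) : A × B)) '' S ∪ {((0 : A), (1 : B))}) := by
      refine Submodule.span_induction
        (p := fun t _ => ((t, (0 : B)) : A × B) ∈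
          Ideal.span ((fun s => ((s, 0) : A × B)) '' S ∪ {((0 : A), (1 : B))}))
        (fun t ht => Ideal.subset_span (Or.inl ⟨t, ht, rfl⟩)) ?_ ?_ ?_ hx
      · exact zero_mem _
      · intro a b _ _ ha hb
        simpa using add_mem ha hb
      · intro a t _ ht
        have := Submodule.smul_mem _ ((a, (0 : B)) : A × B) ht
        simpa [smul_eq_mul] using this
    have h2 : (((0 : A), y) : A × B) ∈
        Ideal.span ((fun s => ((s, 0) : A × B)) '' S ∪ {((0 : A), (1 : B))}) := by
      have := Submodule.smul_mem
        (Ideal.span ((fun s => ((s, 0) : A × B)) '' S ∪ {((0 : A), (1 : B))}))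
        (((1 : A), y) : A × B) (Ideal.subset_span (Or.inr rfl))
      simpa [smul_eq_mul] using this
    simpa using add_mem h1 h2
  · rw [Ideal.span_le]
    rintro z (⟨s, hs, rfl⟩ | rfl)
    · exact ⟨Ideal.subset_span hs, trivial⟩
    · exact ⟨show (0 : A) ∈ Submodule.span A S from zero_mem _, trivial⟩

lemma fg_prod {I : Ideal A} {J : Ideal B} (hI : I.FG) (hJ : J.FG) : (Ideal.prod I J).FG := by
  have h1 : (Ideal.prod I (⊤ : Ideal B)).FG := by
    obtain ⟨S, hSfin, rfl⟩ := Submodule.fg_def.mp hI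
    rw [prod_span_top]
    exact Submodule.fg_def.mpr ⟨_, (hSfin.image _).union (Set.finite_singleton _), rfl⟩
  have h2 : (Ideal.prod (⊤ : Ideal A) J).FG := by
    obtain ⟨S, hSfin, rfl⟩ := Submodule.fg_def.mp hJ
    have h2' : (Ideal.prod (Submodule.span B S) (⊤ : Ideal A)).FG := by
      rw [prod_span_top]
      exact Submodule.fg_def.mpr ⟨_, (hSfin.image _).union (Set.finite_singleton _), rfl⟩
    have := h2'.map ((RingEquiv.prodComm : B × A ≃+* A × B) : B × A →+* A × B)
    rwa [Ideal.map_prodComm_prod] at this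
  have := Submodule.FG.mul h1 h2
  rwa [prod_mul_prod, Ideal.mul_top, Ideal.top_mul] at this

lemma isMaximal_of_comap_surj (f : R →+* A) (hf : Function.Surjective f) {P : Ideal A}
    (h : (P.comap f).IsMaximal) : P.IsMaximal := by
  rw [Ideal.isMaximal_def] at h ⊢
  constructor
  · intro htop
    rw [htop, Ideal.comap_top] at h
    exact h.1 rfl
  · intro Q hQ
    have hlt : P.comap f < Q.comap f := by
      refine lt_of_le_of_ne (Ideal.comap_mono hQ.le) ?_
      intro heq
      have := congrArg (Ideal.map f) heq
      rw [Ideal.map_comap_of_surjective f hf, Ideal.map_comap_of_surjective f hf] at this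
      exact hQ.ne this
    have h2 := congrArg (Ideal.map f) (h.2 _ hlt)
    rwa [Ideal.map_comap_of_surjective f hf, Ideal.map_top] at h2

lemma prod_map_loc (X : Ideal A) (Y : Ideal B) (P : Ideal A) [P.IsPrime]
    (M : Ideal (A × B)) [M.IsPrime] (hM : M = P.comap (RingHom.fst A B))
    (hp : (X.map (algebraMap A (Localization.AtPrime P))).IsPrincipal) :
    ((Ideal.prod X Y).map (algebraMap (A × B) (Localization.AtPrime M))).IsPrincipal := by
  set aL := algebraMap (A × B) (Localization.AtPrime M) with haL
  have hmem : ∀ z : A × B, z ∈ M ↔ z.1 ∈ P := by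
    intro z; rw [hM]; exact Iff.rfl
  have h10 : ((1, 0) : A × B) ∈ M.primeCompl := by
    intro hc
    exact ‹P.IsPrime›.ne_top ((Ideal.eq_top_iff_one P).mpr ((hmem _).mp hc))
  have hu : IsUnit (aL (1, 0)) := IsLocalization.map_units (M := M.primeCompl) _ ⟨_, h10⟩
  have h01 : aL ((0, 1) : A × B) = 0 := by
    have hz : ((0, 1) : A × B) * (1, 0) = 0 := by ext <;> simp
    have hmul : aL (0, 1) * aL (1, 0) = 0 := by rw [← map_mul, hz, map_zero]
    exact (IsUnit.mul_left_eq_zero hu).mp hmul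
  have hkill : ∀ b : B, aL ((0, b) : A × B) = 0 := by
    intro b
    have hh : ((0, b) : A × B) = (0, 1) * (1, b) := by ext <;> simp
    rw [hh, map_mul, h01, zero_mul]
  have key : ∀ (a : A) (b c : B), aL (a, b) = aL (a, c) := by
    intro a b c
    have hh : ((a, b) : A × B) = (a, c) + (0, b - c) := by ext <;> simp
    rw [hh, map_add, hkill, add_zero]
  let g : A →+* Localization.AtPrime M :=
    { toFun := fun a => aL (a, 1)
      map_one' := map_one aL
      map_mul' := fun a b => by rw [← map_mul]; exact key (a * b) 1 (1 * 1)
      map_zero' := h01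
      map_add' := fun a b => by rw [← map_add]; exact key (a + b) 1 (1 + 1) }
  have hcomp : ∀ z : A × B, aL z = g z.1 := fun z => key z.1 z.2 1
  have himg : (Ideal.prod X Y).map aL = X.map g := by
    apply le_antisymm
    · rw [Ideal.map_le_iff_le_comap]
      intro z hz
      show aL z ∈ X.map g
      rw [hcomp]
      exact Ideal.mem_map_of_mem g hz.1
    · rw [Ideal.map_le_iff_le_comap]
      intro a ha
      show g a ∈ (Ideal.prod X Y).map aL
      rw [← hcomp ((a, 0) : A × B)]
      exact Ideal.mem_map_of_mem aL ⟨ha, Y.zero_mem⟩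
  have hunits : ∀ s : P.primeCompl, IsUnit (g s) := by
    intro s
    have hs : (((s : A), (1 : B)) : A × B) ∈ M.primeCompl := fun hc => s.2 ((hmem _).mp hc)
    exact IsLocalization.map_units (M := M.primeCompl) _ ⟨_, hs⟩
  obtain ⟨x, hx⟩ := hp
  refine ⟨⟨IsLocalization.lift hunits x, ?_⟩⟩
  have hmapeq : Ideal.map g X = Ideal.map (IsLocalization.lift hunits)
      (Ideal.map (algebraMap A (Localization.AtPrime P)) X) := by
    rw [Ideal.map_map, IsLocalization.lift_comp]
  rw [himg, hmapeq, hx]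
  exact (Ideal.map_span _ {x}).trans (by simp)

lemma prod_map_loc' (X : Ideal A) (Y : Ideal B) (Q : Ideal B) [Q.IsPrime]
    (M : Ideal (A × B)) [M.IsPrime] (hM : M = Q.comap (RingHom.snd A B))
    (hp : (Y.map (algebraMap B (Localization.AtPrime Q))).IsPrincipal) :
    ((Ideal.prod X Y).map (algebraMap (A × B) (Localization.AtPrime M))).IsPrincipal := by
  set aL := algebraMap (A × B) (Localization.AtPrime M) with haL
  have hmem : ∀ z : A × B, z ∈ M ↔ z.2 ∈ Q := by
    intro z; rw [hM]; exact Iff.rfl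
  have h10 : ((0, 1) : A × B) ∈ M.primeCompl := by
    intro hc
    exact ‹Q.IsPrime›.ne_top ((Ideal.eq_top_iff_one Q).mpr ((hmem _).mp hc))
  have hu : IsUnit (aL (0, 1)) := IsLocalization.map_units (M := M.primeCompl) _ ⟨_, h10⟩
  have h01 : aL ((1, 0) : A × B) = 0 := by
    have hz : ((1, 0) : A × B) * (0, 1) = 0 := by ext <;> simp
    have hmul : aL (1, 0) * aL (0, 1) = 0 := by rw [← map_mul, hz, map_zero]
    exact (IsUnit.mul_left_eq_zero hu).mp hmul
  have hkill : ∀ a : A, aL ((a, 0) : A × B) = 0 := by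
    intro a
    have hh : ((a, 0) : A × B) = (1, 0) * (a, 1) := by ext <;> simp
    rw [hh, map_mul, h01, zero_mul]
  have key : ∀ (b : B) (a c : A), aL (a, b) = aL (c, b) := by
    intro b a c
    have hh : ((a, b) : A × B) = (c, b) + (a - c, 0) := by ext <;> simp
    rw [hh, map_add, hkill, add_zero]
  let g : B →+* Localization.AtPrime M :=
    { toFun := fun b => aL (1, b)
      map_one' := map_one aL
      map_mul' := fun a b => by rw [← map_mul]; exact key (a * b) 1 (1 * 1)
      map_zero' := h01
      map_add' := fun a b => by rw [← map_add]; exact key (a + b) 1 (1 + 1) }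
  have hcomp : ∀ z : A × B, aL z = g z.2 := fun z => key z.2 z.1 1
  have himg : (Ideal.prod X Y).map aL = Y.map g := by
    apply le_antisymm
    · rw [Ideal.map_le_iff_le_comap]
      intro z hz
      show aL z ∈ Y.map g
      rw [hcomp]
      exact Ideal.mem_map_of_mem g hz.2
    · rw [Ideal.map_le_iff_le_comap]
      intro b hb
      show g b ∈ (Ideal.prod X Y).map aL
      rw [← hcomp ((0, b) : A × B)]
      exact Ideal.mem_map_of_mem aL ⟨X.zero_mem, hb⟩
  have hunits : ∀ s : Q.primeCompl, IsUnit (g s) := by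
    intro s
    have hs : (((1 : A), (s : B)) : A × B) ∈ M.primeCompl := fun hc => s.2 ((hmem _).mp hc)
    exact IsLocalization.map_units (M := M.primeCompl) _ ⟨_, hs⟩
  obtain ⟨x, hx⟩ := hp
  refine ⟨⟨IsLocalization.lift hunits x, ?_⟩⟩
  have hmapeq : Ideal.map g Y = Ideal.map (IsLocalization.lift hunits)
      (Ideal.map (algebraMap B (Localization.AtPrime Q)) Y) := by
    rw [Ideal.map_map, IsLocalization.lift_comp]
  rw [himg, hmapeq, hx]
  exact (Ideal.map_span _ {x}).trans (by simp)

lemma invertibleIdeal_top : (⊤ : Ideal A).IsInvertibleIdeal := by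
  refine ⟨⟨1, trivial, one_mem _⟩, ⟨{1}, by simp⟩, ?_⟩
  intro M hM
  haveI := hM.isPrime
  rw [Ideal.map_top]
  exact ⟨⟨1, Ideal.span_singleton_one.symm⟩⟩

lemma isInvertibleIdeal_prod {J₁ : Ideal A} {J₂ : Ideal B}
    (h₁ : J₁.IsInvertibleIdeal) (h₂ : J₂.IsInvertibleIdeal) :
    (Ideal.prod J₁ J₂).IsInvertibleIdeal := by
  obtain ⟨⟨r₁, hr₁J, hr₁⟩, hfg₁, hloc₁⟩ := h₁
  obtain ⟨⟨r₂, hr₂J, hr₂⟩, hfg₂, hloc₂⟩ := h₂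
  refine ⟨⟨(r₁, r₂), ⟨hr₁J, hr₂J⟩, ?_⟩, fg_prod hfg₁ hfg₂, ?_⟩
  · rw [mem_nonZeroDivisors_iff_right] at hr₁ hr₂ ⊢
    intro z hz
    have e1 : z.1 = 0 := hr₁ z.1 (congrArg Prod.fst hz)
    have e2 : z.2 = 0 := hr₂ z.2 (congrArg Prod.snd hz)
    exact Prod.ext e1 e2
  · intro M hM
    haveI := hM.isPrime
    rcases (Ideal.ideal_prod_prime M).mp ‹M.IsPrime› with ⟨p, hp, hMe⟩ | ⟨p, hp, hMe⟩
    · haveI := hp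
      have he : M = p.comap (RingHom.fst A B) := by
        rw [hMe]
        ext z
        exact ⟨fun h => h.1, fun h => ⟨h, trivial⟩⟩
      have hpmax : p.IsMaximal :=
        isMaximal_of_comap_surj (RingHom.fst A B) Prod.fst_surjective (he ▸ hM)
      exact prod_map_loc J₁ J₂ p M he (hloc₁ p hpmax)
    · haveI := hp
      have he : M = p.comap (RingHom.snd A B) := by
        rw [hMe]
        ext z
        exact ⟨fun h => h.2, fun h => ⟨trivial, h⟩⟩
      have hpmax : p.IsMaximal :=
        isMaximal_of_comap_surj (RingHom.snd A B) Prod.snd_surjective (he ▸ hM)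
      exact prod_map_loc' J₁ J₂ p M he (hloc₂ p hpmax)

lemma listProd_map_prod_top (L : List (Ideal A)) :
    (L.map fun H => Ideal.prod H (⊤ : Ideal B)).prod = Ideal.prod L.prod ⊤ := by
  induction L with
  | nil => simp [Ideal.one_eq_top]
  | cons a l ih =>
    rw [List.map_cons, List.prod_cons, List.prod_cons, ih, prod_mul_prod, Ideal.top_mul]

lemma listProd_map_top_prod (L : List (Ideal B)) :
    (L.map fun H => Ideal.prod (⊤ : Ideal A) H).prod = Ideal.prod ⊤ L.prod := by
  induction L with
  | nil => simp [Ideal.one_eq_top]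
  | cons a l ih =>
    rw [List.map_cons, List.prod_cons, List.prod_cons, ih, prod_mul_prod, Ideal.top_mul]

lemma factor_or_top {C : Type*} [CommRing C] (hC : IsStronglyISPRing C) (X : Ideal C) :
    ∃ (J : Ideal C) (L : List (Ideal C)), J.IsInvertibleIdeal ∧
      (∀ H ∈ L, H ≠ ⊤ ∧ H.IsRadical) ∧ X = J * L.prod ∧ (X ≠ ⊤ → L ≠ []) := by
  by_cases hX : X = ⊤
  · exact ⟨⊤, [], invertibleIdeal_top, by simp, by simp [hX], fun h => absurd hX h⟩
  · obtain ⟨J, L, h1, h2, h3, h4⟩ := hC X hX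
    exact ⟨J, L, h1, h3, h4, fun _ => h2⟩

lemma isStronglyISPRing_prod (hA : IsStronglyISPRing A) (hB : IsStronglyISPRing B) :
    IsStronglyISPRing (A × B) := by
  intro W hW
  obtain ⟨J₁, L₁, hJ₁, hL₁, hfac₁, hne₁⟩ := factor_or_top hA (W.map (RingHom.fst A B))
  obtain ⟨J₂, L₂, hJ₂, hL₂, hfac₂, hne₂⟩ := factor_or_top hB (W.map (RingHom.snd A B))
  refine ⟨Ideal.prod J₁ J₂,
    (L₁.map fun H => Ideal.prod H (⊤ : Ideal B)) ++ (L₂.map fun H => Ideal.prod (⊤ : Ideal A) H),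
    isInvertibleIdeal_prod hJ₁ hJ₂, ?_, ?_, ?_⟩
  · intro hnil
    rcases List.append_eq_nil_iff.mp hnil with ⟨e1, e2⟩
    apply hW
    have hw1 : W.map (RingHom.fst A B) = ⊤ := by
      by_contra hc
      exact hne₁ hc (List.map_eq_nil_iff.mp e1)
    have hw2 : W.map (RingHom.snd A B) = ⊤ := by
      by_contra hc
      exact hne₂ hc (List.map_eq_nil_iff.mp e2)
    rw [Ideal.ideal_prod_eq W, hw1, hw2, Ideal.prod_top_top]
  · intro H hH
    rcases List.mem_append.mp hH with h | h
    · obtain ⟨H₀, hH₀, rfl⟩ := List.mem_map.mp h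
      refine ⟨?_, isRadical_prod (hL₁ H₀ hH₀).2 (fun x _ => trivial)⟩
      intro hc
      exact (hL₁ H₀ hH₀).1 (prod_eq_top_iff.mp hc).1
    · obtain ⟨H₀, hH₀, rfl⟩ := List.mem_map.mp h
      refine ⟨?_, isRadical_prod (fun x _ => trivial) (hL₂ H₀ hH₀).2⟩
      intro hc
      exact (hL₂ H₀ hH₀).1 (prod_eq_top_iff.mp hc).2
  · have hcomb : (Ideal.prod J₁ J₂) *
        (Ideal.prod L₁.prod (⊤ : Ideal B) * Ideal.prod (⊤ : Ideal A) L₂.prod)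
        = Ideal.prod (J₁ * L₁.prod) (J₂ * L₂.prod) := by
      rw [prod_mul_prod, prod_mul_prod, Ideal.mul_top, Ideal.top_mul]
    conv_lhs => rw [Ideal.ideal_prod_eq W]
    rw [hfac₁, hfac₂, List.prod_append, listProd_map_prod_top, listProd_map_top_prod, hcomb]

lemma snd_mem_nzd_prod {z : A × B} (hz : z ∈ nonZeroDivisors (A × B)) :
    z.2 ∈ nonZeroDivisors B := by
  rw [mem_nonZeroDivisors_iff_right] at hz ⊢
  intro t ht
  have h0 : ((0, t) : A × B) * z = 0 := by
    ext
    · simp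
    · simpa using ht
  exact congrArg Prod.snd (hz _ h0)

lemma ringEquiv_nzd (e : R ≃+* A) {x : R} (hx : x ∈ nonZeroDivisors R) :
    e x ∈ nonZeroDivisors A := by
  rw [mem_nonZeroDivisors_iff_right] at hx ⊢
  intro t ht
  have h1 : e.symm t * x = 0 := by
    have := congrArg e.symm ht
    simpa using this
  have h2 := hx _ h1
  have := congrArg e h2
  simpa using this

lemma isStronglyISPRing_of_ringEquiv (e : R ≃+* A) (h : IsStronglyISPRing R) :
    IsStronglyISPRing A :=
  isStronglyISPRing_of_surjective e.toRingHom e.surjective (fun _ hx => ringEquiv_nzd e hx) h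

lemma isStronglyISPRing_snd (h : IsStronglyISPRing (A × B)) : IsStronglyISPRing B :=
  isStronglyISPRing_of_surjective (RingHom.snd A B) Prod.snd_surjective
    (fun _ hx => snd_mem_nzd_prod hx) h

lemma eq_zero_of_mem_span_idem {e : A} (he : e * e = e) {x : A}
    (h1 : x ∈ Ideal.span {e}) (h2 : x ∈ Ideal.span {1 - e}) : x = 0 := by
  obtain ⟨c, hc⟩ := Ideal.mem_span_singleton'.mp h1
  obtain ⟨d, hd⟩ := Ideal.mem_span_singleton'.mp h2
  have h3 : x * e = x := by rw [← hc, mul_assoc, he]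
  have h4 : x * e = 0 := by
    rw [← hd, mul_assoc, sub_mul, one_mul, he, sub_self, mul_zero]
  rw [← h3, h4]

noncomputable def pierceEquiv {e : A} (he : e * e = e) :
    A ≃+* (A ⧸ Ideal.span {e}) × (A ⧸ Ideal.span {1 - e}) := by
  refine RingEquiv.ofBijective ((Ideal.Quotient.mk (Ideal.span {e})).prod
    (Ideal.Quotient.mk (Ideal.span {1 - e}))) ⟨?_, ?_⟩
  · rw [injective_iff_map_eq_zero]
    intro x hx
    have h1 : x ∈ Ideal.span {e} :=
      Ideal.Quotient.eq_zero_iff_mem.mp (congrArg Prod.fst hx)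
    have h2 : x ∈ Ideal.span {1 - e} :=
      Ideal.Quotient.eq_zero_iff_mem.mp (congrArg Prod.snd hx)
    exact eq_zero_of_mem_span_idem he h1 h2
  · rintro ⟨a, b⟩
    obtain ⟨x, rfl⟩ := Ideal.Quotient.mk_surjective a
    obtain ⟨y, rfl⟩ := Ideal.Quotient.mk_surjective b
    refine ⟨x + e * (y - x), Prod.ext ?_ ?_⟩
    · show Ideal.Quotient.mk (Ideal.span {e}) (x + e * (y - x)) = Ideal.Quotient.mk _ x
      rw [Ideal.Quotient.mk_eq_mk_iff_sub_mem]
      have hh : x + e * (y - x) - x = (y - x) * e := by ring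
      rw [hh]
      exact Ideal.mem_span_singleton'.mpr ⟨y - x, rfl⟩
    · show Ideal.Quotient.mk (Ideal.span {1 - e}) (x + e * (y - x)) = Ideal.Quotient.mk _ y
      rw [Ideal.Quotient.mk_eq_mk_iff_sub_mem]
      have hh : x + e * (y - x) - y = (x - y) * (1 - e) := by ring
      rw [hh]
      exact Ideal.mem_span_singleton'.mpr ⟨x - y, rfl⟩

set_option synthInstance.maxHeartbeats 1000000 in
noncomputable def amalgDupEquiv {e : A} (he : e * e = e) :
    AmalgDup (Ideal.span {e} : Ideal A) ≃+* A × (A ⧸ Ideal.span {1 - e}) := by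
  refine RingEquiv.ofBijective
    (((RingHom.fst A A).comp (Subring.subtype (AmalgDup (Ideal.span {e})))).prod
      ((Ideal.Quotient.mk (Ideal.span {1 - e})).comp
        ((RingHom.snd A A).comp (Subring.subtype (AmalgDup (Ideal.span {e})))))) ⟨?_, ?_⟩
  · rw [injective_iff_map_eq_zero]
    rintro ⟨⟨a, b⟩, hab⟩ hx
    have h1 : a = 0 := congrArg Prod.fst hx
    have h2 : b ∈ Ideal.span {1 - e} :=
      Ideal.Quotient.eq_zero_iff_mem.mp (congrArg Prod.snd hx)
    have hab' : b - a ∈ Ideal.span {e} := hab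
    have h3 : b ∈ Ideal.span ({e} : Set A) := by rwa [h1, sub_zero] at hab'
    have hb0 : b = 0 := eq_zero_of_mem_span_idem he h3 h2
    apply Subtype.ext
    show ((a, b) : A × A) = 0
    exact Prod.ext h1 hb0
  · rintro ⟨a, c⟩
    obtain ⟨y, rfl⟩ := Ideal.Quotient.mk_surjective c
    have hmem : ((a, a + e * (y - a)) : A × A) ∈ AmalgDup (Ideal.span {e}) := by
      show a + e * (y - a) - a ∈ Ideal.span {e}
      have hh : a + e * (y - a) - a = (y - a) * e := by ring
      rw [hh]
      exact Ideal.mem_span_singleton'.mpr ⟨y - a, rfl⟩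
    refine ⟨⟨(a, a + e * (y - a)), hmem⟩, Prod.ext rfl ?_⟩
    show Ideal.Quotient.mk (Ideal.span {1 - e}) (a + e * (y - a)) = Ideal.Quotient.mk _ y
    rw [Ideal.Quotient.mk_eq_mk_iff_sub_mem]
    have hh : a + e * (y - a) - y = (a - y) * (1 - e) := by ring
    rw [hh]
    exact Ideal.mem_span_singleton'.mpr ⟨a - y, rfl⟩

lemma amalgDup_fst_nzd {I : Ideal A} {x : AmalgDup I} (hx : x ∈ nonZeroDivisors (AmalgDup I)) :
    (x : A × A).1 ∈ nonZeroDivisors A := by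
  obtain ⟨⟨a, b⟩, hab⟩ := x
  have hab' : b - a ∈ I := hab
  rw [mem_nonZeroDivisors_iff_right] at hx ⊢
  intro t ht
  have hu : (((b - a) * t, 0) : A × A) ∈ AmalgDup I := by
    show (0 : A) - (b - a) * t ∈ I
    rw [zero_sub]
    exact I.neg_mem (I.mul_mem_right t hab')
  have h1 : (⟨((b - a) * t, 0), hu⟩ : AmalgDup I) * ⟨(a, b), hab⟩ = 0 := by
    apply Subtype.ext
    show ((b - a) * t * a, 0 * b) = (0 : A × A)
    refine Prod.ext ?_ (by simp)
    show (b - a) * t * a = 0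
    rw [mul_assoc, ht, mul_zero]
  have hbt : (b - a) * t = 0 :=
    congrArg (fun z : AmalgDup I => (z : A × A).1) (hx _ h1)
  have htb : t * b = 0 := by
    have hh : t * b = t * a + (b - a) * t := by ring
    rw [hh, ht, hbt, add_zero]
  have hv : ((t, t) : A × A) ∈ AmalgDup I := by
    show t - t ∈ I
    simpa using I.zero_mem
  have h3 : (⟨(t, t), hv⟩ : AmalgDup I) * ⟨(a, b), hab⟩ = 0 := by
    apply Subtype.ext
    show ((t * a, t * b) : A × A) = 0
    exact Prod.ext ht htb
  exact congrArg (fun z : AmalgDup I => (z : A × A).1) (hx _ h3)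

end Aux

/-- (1) If `A ⋈ I` is a strongly ISP-ring then so is `A`.  (2) If `I` is a finitely
generated idempotent ideal, then `A ⋈ I` is a strongly ISP-ring iff `A` is. -/
theorem amalgDup_stronglyISPRing {A : Type*} [CommRing A] (I : Ideal A) :
    (IsStronglyISPRing (AmalgDup I) → IsStronglyISPRing A) ∧
      (I.FG → I * I = I →
        (IsStronglyISPRing (AmalgDup I) ↔ IsStronglyISPRing A)) := by
  have part1 : IsStronglyISPRing (AmalgDup I) → IsStronglyISPRing A := by
    intro h
    refine isStronglyISPRing_of_surjective
      ((RingHom.fst A A).comp (Subring.subtype (AmalgDup I))) ?_ ?_ h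
    · intro a
      exact ⟨⟨(a, a), by show a - a ∈ I; simpa using I.zero_mem⟩, rfl⟩
    · intro x hx
      exact amalgDup_fst_nzd hx
  refine ⟨part1, ?_⟩
  intro hFG hidem
  refine ⟨part1, ?_⟩
  intro hA
  obtain ⟨e, he, hIe⟩ := (Ideal.isIdempotentElem_iff_of_fg I hFG).mp hidem
  subst hIe
  have he' : e * e = e := he
  have h1 : IsStronglyISPRing ((A ⧸ Ideal.span {e}) × (A ⧸ Ideal.span {1 - e})) :=
    isStronglyISPRing_of_ringEquiv (pierceEquiv he') hA
  have h2 : IsStronglyISPRing (A ⧸ Ideal.span {1 - e}) := isStronglyISPRing_snd h1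
  have h3 : IsStronglyISPRing (A × (A ⧸ Ideal.span {1 - e})) := isStronglyISPRing_prod hA h2
  exact isStronglyISPRing_of_ringEquiv (amalgDupEquiv he').symm h3
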